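/- Let α, β, γ, μ, ν be an admissible solution of System B on [0,∞) with β ≡ γ, and set τ := μ²+ν². Then there exists t₁ ≥ 0 such that μ(t) > 0 for all t ≥ t₁ (in particular τ(t) > 0 for t ≥ t₁), the function μ/√τ is nondecreasing on [t₁,∞), and μ(t)/√(τ(t)) → 1 as t → ∞ (i.e. μ ∼ √τ). -/

import Mathlib

open Set Filter Real Topology

private lemma monoAux {f f' : ℝ → ℝ} {a : ℝ}
    (hf : ∀ t ∈ Ici a, HasDerivWithinAt f (f' t) (Ici a) t)
    (h0 : ∀ t ∈ Ici a, 0 ≤ f' t) : MonotoneOn f (Ici a) := by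
  apply monotoneOn_of_deriv_nonneg (convex_Ici a)
    (fun t ht => (hf t ht).continuousWithinAt)
  · intro t ht
    rw [interior_Ici] at ht
    exact (((hf t (Set.mem_Ici.mpr (le_of_lt (Set.mem_Ioi.mp ht)))).hasDerivAt (Ici_mem_nhds ht)).differentiableAt).differentiableWithinAt
  · intro t ht
    rw [interior_Ici] at ht
    rw [((hf t (Set.mem_Ici.mpr (le_of_lt (Set.mem_Ioi.mp ht)))).hasDerivAt (Ici_mem_nhds ht)).deriv]
    exact h0 t (Set.mem_Ici.mpr (le_of_lt (Set.mem_Ioi.mp ht)))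

private lemma constAux {f f' : ℝ → ℝ} {a : ℝ}
    (hf : ∀ t ∈ Ici a, HasDerivWithinAt f (f' t) (Ici a) t)
    (h0 : ∀ t ∈ Ici a, f' t = 0) : ∀ t ∈ Ici a, f t = f a := by
  intro t ht
  have h1 : f a ≤ f t :=
    monoAux hf (fun u hu => (h0 u hu).ge) self_mem_Ici ht ht
  have hneg : ∀ u ∈ Ici a, HasDerivWithinAt (fun x => -f x) (-(f' u)) (Ici a) u :=
    fun u hu => (hf u hu).neg
  have h2 : -f a ≤ -f t :=
    monoAux hneg (fun u hu => by rw [h0 u hu]; simp) self_mem_Ici ht ht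
  linarith

private lemma linGrowth {f f' : ℝ → ℝ} {a C : ℝ}
    (hf : ∀ t ∈ Ici a, HasDerivWithinAt f (f' t) (Ici a) t)
    (h0 : ∀ t ∈ Ici a, C ≤ f' t) :
    ∀ t ∈ Ici a, f a + C * (t - a) ≤ f t := by
  have hg : ∀ u ∈ Ici a, HasDerivWithinAt (fun x => f x - C * x) (f' u - C) (Ici a) u := by
    intro u hu
    have h := (hf u hu).sub (((hasDerivWithinAt_id u (Ici a))).const_mul C)
    simp only [mul_one] at h
    exact h
  intro t ht
  have := monoAux hg (fun u hu => by linarith [h0 u hu]) self_mem_Ici ht ht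
  simp only at this
  linarith

private lemma exists_lt_of_hasDerivAt_pos {f : ℝ → ℝ} {x d : ℝ} (hx : 0 < x)
    (hf : HasDerivAt f d x) (hd : 0 < d) : ∃ y, 0 < y ∧ y < x ∧ f y < f x := by
  have h := hasDerivAt_iff_tendsto_slope.mp hf
  have h2 : Tendsto (slope f x) (𝓝[<] x) (𝓝 d) :=
    h.mono_left (nhdsWithin_mono x fun y hy => ne_of_lt hy)
  have h3 : ∀ᶠ y in 𝓝[<] x, 0 < slope f x y := h2.eventually_const_lt hd
  have h4 : Ioo 0 x ∈ 𝓝[<] x := Ioo_mem_nhdsLT_of_mem ⟨hx, le_refl x⟩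
  obtain ⟨y, hy1, hy2⟩ := (h3.and (eventually_of_mem h4 fun y hy => hy)).exists
  refine ⟨y, hy2.1, hy2.2, ?_⟩
  rw [slope_def_field] at hy1
  rcases div_pos_iff.mp hy1 with ⟨hnum, hden⟩ | ⟨hnum, hden⟩
  · linarith [hy2.2]
  · linarith

private lemma lowerBound {f : ℝ → ℝ} {d : ℝ}
    (hd : d < f 0)
    (hfc : ContinuousOn f (Ici 0))
    (hderiv : ∀ t, 0 < t → f t ≤ d → ∃ e, 0 < e ∧ HasDerivAt f e t) :
    ∀ t ∈ Ici 0, d < f t := by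
  by_contra hcon
  push_neg at hcon
  obtain ⟨t0, ht0, hft0⟩ := hcon
  have hBcl : IsClosed (Ici 0 ∩ f ⁻¹' (Iic d)) :=
    hfc.preimage_isClosed_of_isClosed isClosed_Ici isClosed_Iic
  have hBne : (Ici 0 ∩ f ⁻¹' (Iic d)).Nonempty := ⟨t0, ht0, hft0⟩
  have hBbd : BddBelow (Ici 0 ∩ f ⁻¹' (Iic d)) := ⟨0, fun x hx => hx.1⟩
  have hmem := hBcl.csInf_mem hBne hBbd
  set c := sInf (Ici 0 ∩ f ⁻¹' (Iic d)) with hc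
  have hc0 : (0:ℝ) ≤ c := hmem.1
  have hcd : f c ≤ d := hmem.2
  have hcpos : 0 < c := by
    rcases hc0.lt_or_eq with hlt | heq
    · exact hlt
    · exfalso; rw [← heq] at hcd; linarith
  obtain ⟨e, he, hfe⟩ := hderiv c hcpos hcd
  obtain ⟨y, hy0, hyc, hfy⟩ := exists_lt_of_hasDerivAt_pos hcpos hfe he
  have hyB : y ∈ Ici 0 ∩ f ⁻¹' (Iic d) := ⟨hy0.le, le_trans hfy.le hcd⟩
  exact absurd (csInf_le hBbd hyB) (not_le.mpr hyc)

private lemma g_mono {k x y : ℝ} (hx : 0 < x) (hxy : x ≤ y) :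
    x / Real.sqrt (x^2 + k^2) ≤ y / Real.sqrt (y^2 + k^2) := by
  have hy : 0 < y := lt_of_lt_of_le hx hxy
  have hx2 : (0:ℝ) < x^2 + k^2 := by positivity
  have hy2 : (0:ℝ) < y^2 + k^2 := by positivity
  rw [div_le_div_iff₀ (Real.sqrt_pos.mpr hx2) (Real.sqrt_pos.mpr hy2)]
  have e1 : x * Real.sqrt (y^2+k^2) = Real.sqrt (x^2 * (y^2+k^2)) := by
    rw [Real.sqrt_mul (sq_nonneg x), Real.sqrt_sq hx.le]
  have e2 : y * Real.sqrt (x^2+k^2) = Real.sqrt (y^2 * (x^2+k^2)) := by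
    rw [Real.sqrt_mul (sq_nonneg y), Real.sqrt_sq hy.le]
  rw [e1, e2]
  apply Real.sqrt_le_sqrt
  nlinarith [sq_nonneg k, mul_le_mul hxy hxy hx.le hy.le]

private lemma g_tendsto (k : ℝ) :
    Tendsto (fun x : ℝ => x / Real.sqrt (x^2 + k^2)) atTop (𝓝 1) := by
  have htop : Tendsto (fun x : ℝ => x^2 + k^2) atTop atTop :=
    tendsto_atTop_add_const_right _ _ (tendsto_pow_atTop two_ne_zero)
  have h0 : Tendsto (fun x : ℝ => k^2 / (x^2 + k^2)) atTop (𝓝 0) :=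
    tendsto_const_nhds.div_atTop htop
  have h1 : Tendsto (fun x : ℝ => x^2 / (x^2 + k^2)) atTop (𝓝 1) := by
    have h2 : Tendsto (fun x : ℝ => 1 - k^2/(x^2+k^2)) atTop (𝓝 1) := by
      simpa using tendsto_const_nhds.sub h0
    apply h2.congr'
    filter_upwards [eventually_gt_atTop (0:ℝ)] with x hx
    have hne : x^2 + k^2 ≠ 0 := by positivity
    field_simp
    ring
  have h3 : Tendsto (fun x : ℝ => Real.sqrt (x^2/(x^2+k^2))) atTop (𝓝 1) := by
    have := (Real.continuous_sqrt.continuousAt (x := (1:ℝ))).tendsto.comp h1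
    simpa [Real.sqrt_one, Function.comp_def] using this
  apply h3.congr'
  filter_upwards [eventually_gt_atTop (0:ℝ)] with x hx
  rw [Real.sqrt_div (sq_nonneg x), Real.sqrt_sq hx.le]

/-- **System B**: the homogeneous Ricci flow equations on `SL(2,ℂ)/U(1)` for
real-valued differentiable functions `α β γ μ ν` on a set `s`, with `τ := μ² + ν²`,
together with the admissibility conditions `α > 0`, `β > 0`, `γ > 0`, `βγ > τ`. -/
def IsAdmissibleSolutionB (α β γ μ ν : ℝ → ℝ) (s : Set ℝ) : Prop :=
  ∀ t ∈ s,
    0 < α t ∧ 0 < β t ∧ 0 < γ t ∧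
    μ t ^ 2 + ν t ^ 2 < β t * γ t ∧
    HasDerivWithinAt α
      (2 * (16 * β t * γ t - α t ^ 2) / (β t * γ t - (μ t ^ 2 + ν t ^ 2))) s t ∧
    HasDerivWithinAt β
      (-(β t * (16 * (μ t ^ 2 + ν t ^ 2) - α t ^ 2)) /
        (α t * (β t * γ t - (μ t ^ 2 + ν t ^ 2)))) s t ∧
    HasDerivWithinAt γ
      (-(γ t * (16 * (μ t ^ 2 + ν t ^ 2) - α t ^ 2)) /
        (α t * (β t * γ t - (μ t ^ 2 + ν t ^ 2)))) s t ∧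
    HasDerivWithinAt μ
      (8 - μ t * (16 * β t * γ t - α t ^ 2) /
        (α t * (β t * γ t - (μ t ^ 2 + ν t ^ 2)))) s t ∧
    HasDerivWithinAt ν
      (-(ν t * (16 * β t * γ t - α t ^ 2)) /
        (α t * (β t * γ t - (μ t ^ 2 + ν t ^ 2)))) s t

/-- For an admissible solution of System B on `[0,∞)` with `β ≡ γ` and `τ := μ² + ν²`:
after some time `t₁ ≥ 0` one has `μ > 0` (in particular `τ > 0`), the quotient `μ/√τ`
is nondecreasing on `[t₁, ∞)`, and `μ/√τ → 1` as `t → ∞` (i.e. `μ ∼ √τ`). -/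
theorem systemB_mu_asymptotic (α β γ μ ν : ℝ → ℝ)
    (h : IsAdmissibleSolutionB α β γ μ ν (Set.Ici 0))
    (hβγ : ∀ t ∈ Set.Ici (0 : ℝ), β t = γ t) :
    ∃ t₁ : ℝ, 0 ≤ t₁ ∧
      (∀ t ≥ t₁, 0 < μ t) ∧
      (∀ t ≥ t₁, 0 < μ t ^ 2 + ν t ^ 2) ∧
      MonotoneOn (fun t => μ t / Real.sqrt (μ t ^ 2 + ν t ^ 2)) (Set.Ici t₁) ∧
      Filter.Tendsto (fun t => μ t / Real.sqrt (μ t ^ 2 + ν t ^ 2))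
        Filter.atTop (nhds 1) := by
  have key : ∀ t ∈ Set.Ici (0:ℝ),
      0 < α t ∧ 0 < β t ∧ μ t ^ 2 + ν t ^ 2 < β t ^ 2 ∧
      HasDerivWithinAt α
        (2 * (16 * β t ^ 2 - α t ^ 2) / (β t ^ 2 - (μ t ^ 2 + ν t ^ 2))) (Set.Ici 0) t ∧
      HasDerivWithinAt (fun x => μ x * Real.sqrt (α x)) (8 * Real.sqrt (α t)) (Set.Ici 0) t ∧
      HasDerivWithinAt (fun x => ν x * Real.sqrt (α x)) 0 (Set.Ici 0) t ∧
      HasDerivWithinAt (fun x => α x * β x ^ 2) (32 * β t ^ 2) (Set.Ici 0) t := by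
    intro t ht
    obtain ⟨hα, hβ, -, hτ, hdα, hdβ, -, hdμ, hdν⟩ := h t ht
    rw [← hβγ t ht] at hτ hdα hdβ hdμ hdν
    have hτβ : μ t ^ 2 + ν t ^ 2 < β t ^ 2 := by nlinarith
    have hden1 : β t ^ 2 - (μ t ^ 2 + ν t ^ 2) ≠ 0 := by nlinarith
    have hden2 : β t * β t - (μ t ^ 2 + ν t ^ 2) ≠ 0 := by nlinarith
    have hαne : α t ≠ 0 := hα.ne'
    have hdα' : HasDerivWithinAt α
        (2 * (16 * β t ^ 2 - α t ^ 2) / (β t ^ 2 - (μ t ^ 2 + ν t ^ 2))) (Set.Ici 0) t := by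
      convert hdα using 1
      ring
    have hsq : HasDerivWithinAt (fun x => Real.sqrt (α x))
        ((2 * (16 * β t ^ 2 - α t ^ 2) / (β t ^ 2 - (μ t ^ 2 + ν t ^ 2))) /
          (2 * Real.sqrt (α t))) (Set.Ici 0) t := hdα'.sqrt hαne
    have hq2 : Real.sqrt (α t) ^ 2 = α t := Real.sq_sqrt hα.le
    have hqpos : 0 < Real.sqrt (α t) := Real.sqrt_pos.mpr hα
    refine ⟨hα, hβ, hτβ, hdα', ?_, ?_, ?_⟩
    · refine (hdμ.mul hsq).congr_deriv ?_
      set q := Real.sqrt (α t) with hqdef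
      rw [← hq2]
      field_simp
      ring
    · refine (hdν.mul hsq).congr_deriv ?_
      set q := Real.sqrt (α t) with hqdef
      rw [← hq2]
      field_simp
      ring
    · refine (hdα'.mul (hdβ.pow 2)).congr_deriv ?_
      push_cast [Pi.pow_apply]
      field_simp
      ring
  have hcont : ContinuousOn α (Set.Ici 0) := fun t ht =>
    (key t ht).2.2.2.1.continuousWithinAt
  have hPmono : MonotoneOn (fun x => α x * β x ^ 2) (Set.Ici 0) :=
    monoAux (fun t ht => (key t ht).2.2.2.2.2.2) (fun t ht => by positivity)
  have hNconst : ∀ t ∈ Set.Ici (0:ℝ), ν t * Real.sqrt (α t) = ν 0 * Real.sqrt (α 0) :=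
    constAux (f' := fun _ => 0) (fun t ht => (key t ht).2.2.2.2.2.1) (fun t ht => rfl)
  have hMmono : MonotoneOn (fun x => μ x * Real.sqrt (α x)) (Set.Ici 0) :=
    monoAux (fun t ht => (key t ht).2.2.2.2.1) (fun t ht => by positivity)
  obtain ⟨hα0, hβ0, -, -, -, -, -⟩ := key 0 self_mem_Ici
  have hP0pos : 0 < α 0 * β 0 ^ 2 := by positivity
  set d : ℝ := min (α 0 / 2) (min 1 (4 * (α 0 * β 0 ^ 2))) with hd
  have hdpos : 0 < d := lt_min (by linarith) (lt_min one_pos (by linarith))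
  have hdα0 : d < α 0 := lt_of_le_of_lt (min_le_left _ _) (by linarith)
  have hd3 : d ^ 3 ≤ 4 * (α 0 * β 0 ^ 2) := by
    have h1 : d ≤ 1 := le_trans (min_le_right _ _) (min_le_left _ _)
    have h2 : d ≤ 4 * (α 0 * β 0 ^ 2) := le_trans (min_le_right _ _) (min_le_right _ _)
    have e1 : d * d ≤ 1 * 1 := mul_le_mul h1 h1 hdpos.le zero_le_one
    have e2 : d ^ 3 ≤ d := by nlinarith
    linarith
  have hαlow : ∀ t ∈ Set.Ici (0:ℝ), d < α t := by
    apply lowerBound hdα0 hcont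
    intro t htpos htd
    have ht : t ∈ Set.Ici (0:ℝ) := htpos.le
    obtain ⟨hα, hβ, hτβ, hdα, -, -, -⟩ := key t ht
    have hPt : α 0 * β 0 ^ 2 ≤ α t * β t ^ 2 := hPmono self_mem_Ici ht htpos.le
    have hcube : α t ^ 3 ≤ 4 * (α t * β t ^ 2) := by
      calc α t ^ 3 ≤ d ^ 3 := pow_le_pow_left₀ hα.le htd 3
        _ ≤ 4 * (α 0 * β 0 ^ 2) := hd3
        _ ≤ 4 * (α t * β t ^ 2) := by linarith
    have hnum : 0 < 16 * β t ^ 2 - α t ^ 2 := by nlinarith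
    exact ⟨_, div_pos (by linarith) (by linarith),
      hdα.hasDerivAt (Ici_mem_nhds htpos)⟩
  have hsd : ∀ t ∈ Set.Ici (0:ℝ), 8 * Real.sqrt d ≤ 8 * Real.sqrt (α t) := by
    intro t ht
    have := Real.sqrt_le_sqrt (hαlow t ht).le
    linarith
  have hMlin : ∀ t ∈ Set.Ici (0:ℝ),
      μ 0 * Real.sqrt (α 0) + 8 * Real.sqrt d * (t - 0) ≤ μ t * Real.sqrt (α t) :=
    linGrowth (fun t ht => (key t ht).2.2.2.2.1) hsd
  have hsdpos : 0 < 8 * Real.sqrt d := by positivity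
  set t₁ : ℝ := max 0 ((1 - μ 0 * Real.sqrt (α 0)) / (8 * Real.sqrt d)) with ht₁
  have ht₁0 : 0 ≤ t₁ := le_max_left _ _
  have hM1 : ∀ t ≥ t₁, 1 ≤ μ t * Real.sqrt (α t) := by
    intro t htt
    have ht0 : (0:ℝ) ≤ t := le_trans ht₁0 htt
    have h1 := hMlin t ht0
    have h2 : (1 - μ 0 * Real.sqrt (α 0)) / (8 * Real.sqrt d) ≤ t :=
      le_trans (le_max_right _ _) htt
    rw [div_le_iff₀ hsdpos] at h2
    have h4 : t * (8 * Real.sqrt d) = 8 * Real.sqrt d * t := mul_comm _ _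
    linarith
  have hμpos : ∀ t ≥ t₁, 0 < μ t := by
    intro t htt
    have ht : t ∈ Set.Ici (0:ℝ) := le_trans ht₁0 htt
    have hq : 0 < Real.sqrt (α t) := Real.sqrt_pos.mpr (key t ht).1
    by_contra hle
    push_neg at hle
    have h5 := mul_le_mul_of_nonneg_right hle hq.le
    rw [zero_mul] at h5
    linarith [hM1 t htt]
  have hτpos : ∀ t ≥ t₁, 0 < μ t ^ 2 + ν t ^ 2 := fun t htt =>
    lt_of_lt_of_le (pow_pos (hμpos t htt) 2) (le_add_of_nonneg_right (sq_nonneg _))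
  have hid : ∀ t ≥ t₁, μ t / Real.sqrt (μ t ^ 2 + ν t ^ 2)
      = (μ t * Real.sqrt (α t)) /
        Real.sqrt ((μ t * Real.sqrt (α t)) ^ 2 + (ν 0 * Real.sqrt (α 0)) ^ 2) := by
    intro t htt
    have ht : t ∈ Set.Ici (0:ℝ) := le_trans ht₁0 htt
    have hα := (key t ht).1
    have hq : 0 < Real.sqrt (α t) := Real.sqrt_pos.mpr hα
    have hτ : 0 < Real.sqrt (μ t ^ 2 + ν t ^ 2) := Real.sqrt_pos.mpr (hτpos t htt)
    have hkt : ν 0 * Real.sqrt (α 0) = ν t * Real.sqrt (α t) := (hNconst t ht).symm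
    have hsum : (μ t * Real.sqrt (α t)) ^ 2 + (ν 0 * Real.sqrt (α 0)) ^ 2
        = (μ t ^ 2 + ν t ^ 2) * α t := by
      rw [hkt, mul_pow, mul_pow, Real.sq_sqrt hα.le]; ring
    rw [hsum, Real.sqrt_mul (by positivity) (α t)]
    rw [mul_div_mul_right _ _ hq.ne']
  refine ⟨t₁, ht₁0, hμpos, hτpos, ?_, ?_⟩
  · intro a ha b hb hab
    simp only
    rw [hid a ha, hid b hb]
    exact g_mono (lt_of_lt_of_le one_pos (hM1 a ha))
      (hMmono (le_trans ht₁0 ha) (le_trans ht₁0 hb) hab)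
  · have haff : Tendsto (fun t : ℝ =>
        μ 0 * Real.sqrt (α 0) + 8 * Real.sqrt d * (t - 0)) atTop atTop := by
      apply tendsto_atTop_add_const_left
      simp only [sub_zero]
      exact Tendsto.const_mul_atTop hsdpos tendsto_id
    have hMtop : Tendsto (fun t => μ t * Real.sqrt (α t)) atTop atTop := by
      apply tendsto_atTop_mono' atTop ?_ haff
      filter_upwards [eventually_ge_atTop (0:ℝ)] with t ht0
      exact hMlin t ht0
    have hcomp := (g_tendsto (ν 0 * Real.sqrt (α 0))).comp hMtop
    refine Filter.Tendsto.congr' ?_ hcomp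
    filter_upwards [eventually_ge_atTop t₁] with t htt
    simp only [Function.comp]
    exact (hid t htt).symm
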